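/- The optimal value of max Σ_j τ_j·f_j(P_j) subject to τ_j ≥ 0, Σ τ_j = 1, Σ τ_j·P_j ≤ P̄ with f_j(P) = ω_j log(1+η_j P) equals the concave envelope (least concave majorant) of the function h(P) = max_j f_j(P), evaluated at P̄. -/

import Mathlib

open Finset Set

private lemma conc_log {η : ℝ} (hη : 0 < η) :
    ConcaveOn ℝ (Set.Ici 0) (fun x : ℝ => Real.log (1 + η * x)) := by
  have h := (strictConcaveOn_log_Ioi.concaveOn).comp_affineMap
    (AffineMap.lineMap (1 : ℝ) (1 + η))
  have hsub : (Set.Ici (0:ℝ)) ⊆ (AffineMap.lineMap (1 : ℝ) (1 + η)) ⁻¹' (Set.Ioi 0) := by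
    intro x hx
    simp only [Set.mem_preimage, AffineMap.lineMap_apply, Set.mem_Ioi, smul_eq_mul,
      vsub_eq_sub, vadd_eq_add] at *
    nlinarith [hx.out]
  have h2 := (h.subset hsub (convex_Ici 0))
  have heq : (fun x : ℝ => Real.log (1 + η * x))
      = Real.log ∘ (AffineMap.lineMap (1 : ℝ) (1 + η)) := by
    funext x
    simp [AffineMap.lineMap_apply, smul_eq_mul]
    ring_nf
  rw [heq]; exact h2

private lemma conc_f {ω η : ℝ} (hω : 0 ≤ ω) (hη : 0 < η) :
    ConcaveOn ℝ (Set.Ici 0) (fun x : ℝ => ω * Real.log (1 + η * x)) := by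
  simpa [smul_eq_mul] using (conc_log hη).smul hω

private lemma f_nonneg {ω η y : ℝ} (hω : 0 ≤ ω) (hη : 0 < η) (hy : 0 ≤ y) :
    0 ≤ ω * Real.log (1 + η * y) := by
  have : 0 ≤ Real.log (1 + η * y) := Real.log_nonneg (by nlinarith)
  positivity

private lemma f_mono {ω η x y : ℝ} (hω : 0 ≤ ω) (hη : 0 < η) (hx : 0 ≤ x) (hxy : x ≤ y) :
    ω * Real.log (1 + η * x) ≤ ω * Real.log (1 + η * y) := by
  exact mul_le_mul_of_nonneg_left (Real.log_le_log (by nlinarith) (by nlinarith)) hω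

/-- The feasible value set with power budget `y`. -/
private def Fs (n : ℕ) (ω η : Fin n → ℝ) (y : ℝ) : Set ℝ :=
  {v : ℝ | ∃ τ P : Fin n → ℝ,
      (∀ j, 0 ≤ τ j) ∧ (∑ j, τ j) = 1 ∧ (∀ j, 0 ≤ P j) ∧ (∑ j, τ j * P j) ≤ y ∧
      v = ∑ j, τ j * (ω j * Real.log (1 + η j * P j))}

private lemma f_mem_Fs {n : ℕ} (ω η : Fin n → ℝ) {y : ℝ} (hy : 0 ≤ y) (j : Fin n) :
    ω j * Real.log (1 + η j * y) ∈ Fs n ω η y := by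
  refine ⟨fun i => if i = j then 1 else 0, fun i => if i = j then y else 0,
    fun i => by positivity, by simp, fun i => by positivity, ?_, ?_⟩
  · simp only [ite_mul, mul_ite, one_mul, zero_mul, mul_zero]
    simp [Finset.sum_ite_eq']
  · rw [Finset.sum_eq_single j]
    · simp
    · intro i _ hij; simp [hij]
    · simp

private lemma Fs_nonempty {n : ℕ} (hn : 0 < n) (ω η : Fin n → ℝ) {y : ℝ} (hy : 0 ≤ y) :
    (Fs n ω η y).Nonempty :=
  ⟨_, f_mem_Fs ω η hy ⟨0, hn⟩⟩

private lemma Fs_bddAbove {n : ℕ} (ω η : Fin n → ℝ) (hω : ∀ j, 0 < ω j) (hη : ∀ j, 0 < η j)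
    {y : ℝ} (hy : 0 ≤ y) :
    (∀ v ∈ Fs n ω η y, v ≤ ∑ j, ω j * Real.log (1 + η j * y)) := by
  rintro v ⟨τ, P, hτ0, hτ1, hP0, hbud, rfl⟩
  apply Finset.sum_le_sum
  intro j _
  -- τ j * f j (P j) ≤ f j (τ j * P j) ≤ f j y
  have hτ1j : τ j ≤ 1 := by
    rw [← hτ1]
    exact Finset.single_le_sum (fun i _ => hτ0 i) (Finset.mem_univ j)
  have hτPy : τ j * P j ≤ y := by
    refine le_trans ?_ hbud
    exact Finset.single_le_sum (fun i (_ : i ∈ Finset.univ) => mul_nonneg (hτ0 i) (hP0 i))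
      (Finset.mem_univ j)
  have hconc := conc_f (ω := ω j) (η := η j) (hω j).le (hη j)
  have h1 : τ j * (ω j * Real.log (1 + η j * P j)) ≤ ω j * Real.log (1 + η j * (τ j * P j)) := by
    have := hconc.2 (Set.mem_Ici.mpr (hP0 j)) (Set.mem_Ici.mpr le_rfl) (hτ0 j)
      (by linarith : (0:ℝ) ≤ 1 - τ j) (by ring)
    simpa [smul_eq_mul] using this
  exact h1.trans (f_mono (hω j).le (hη j) (mul_nonneg (hτ0 j) (hP0 j)) hτPy)

private lemma Fs_combine {n : ℕ} (ω η : Fin n → ℝ) (hω : ∀ j, 0 < ω j) (hη : ∀ j, 0 < η j)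
    {a b y1 y2 v1 v2 : ℝ} (ha : 0 ≤ a) (hb : 0 ≤ b) (hab : a + b = 1)
    (h1 : v1 ∈ Fs n ω η y1) (h2 : v2 ∈ Fs n ω η y2) :
    ∃ v ∈ Fs n ω η (a * y1 + b * y2), a * v1 + b * v2 ≤ v := by
  obtain ⟨τ1, P1, hτ10, hτ11, hP10, hbud1, rfl⟩ := h1
  obtain ⟨τ2, P2, hτ20, hτ21, hP20, hbud2, rfl⟩ := h2
  set τ : Fin n → ℝ := fun j => a * τ1 j + b * τ2 j with hτdef
  set P : Fin n → ℝ := fun j =>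
    if τ j = 0 then 0 else (a * τ1 j * P1 j + b * τ2 j * P2 j) / τ j with hPdef
  have hτ0 : ∀ j, 0 ≤ τ j := fun j =>
    add_nonneg (mul_nonneg ha (hτ10 j)) (mul_nonneg hb (hτ20 j))
  have hzero : ∀ j, τ j = 0 → a * τ1 j = 0 ∧ b * τ2 j = 0 := by
    intro j hj
    have e1 : (0:ℝ) ≤ a * τ1 j := mul_nonneg ha (hτ10 j)
    have e2 : (0:ℝ) ≤ b * τ2 j := mul_nonneg hb (hτ20 j)
    have hj' : a * τ1 j + b * τ2 j = 0 := hj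
    constructor <;> linarith
  have hP0 : ∀ j, 0 ≤ P j := by
    intro j
    by_cases hj : τ j = 0
    · simp [hPdef, hj]
    · simp only [hPdef, if_neg hj]
      exact div_nonneg (add_nonneg (mul_nonneg (mul_nonneg ha (hτ10 j)) (hP10 j))
        (mul_nonneg (mul_nonneg hb (hτ20 j)) (hP20 j))) (hτ0 j)
  have hτP : ∀ j, τ j * P j = a * τ1 j * P1 j + b * τ2 j * P2 j := by
    intro j
    by_cases hj : τ j = 0
    · obtain ⟨e1, e2⟩ := hzero j hj
      simp [hPdef, hj, e1, e2]
    · simp only [hPdef, if_neg hj]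
      rw [mul_comm, div_mul_cancel₀ _ hj]
  have hτ1 : (∑ j, τ j) = 1 := by
    simp only [hτdef, Finset.sum_add_distrib, ← Finset.mul_sum, hτ11, hτ21]
    linarith
  have hval : ∀ j, a * (τ1 j * (ω j * Real.log (1 + η j * P1 j)))
      + b * (τ2 j * (ω j * Real.log (1 + η j * P2 j)))
      ≤ τ j * (ω j * Real.log (1 + η j * P j)) := by
    intro j
    by_cases hj : τ j = 0
    · obtain ⟨e1, e2⟩ := hzero j hj
      have t1 : a * (τ1 j * (ω j * Real.log (1 + η j * P1 j))) = 0 := by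
        rw [← mul_assoc, e1, zero_mul]
      have t2 : b * (τ2 j * (ω j * Real.log (1 + η j * P2 j))) = 0 := by
        rw [← mul_assoc, e2, zero_mul]
      rw [t1, t2, hj]; simp
    · have hτpos : 0 < τ j := lt_of_le_of_ne (hτ0 j) (Ne.symm hj)
      have hconc := conc_f (ω := ω j) (η := η j) (hω j).le (hη j)
      have hw1 : 0 ≤ a * τ1 j / τ j := div_nonneg (mul_nonneg ha (hτ10 j)) (hτ0 j)
      have hw2 : 0 ≤ b * τ2 j / τ j := div_nonneg (mul_nonneg hb (hτ20 j)) (hτ0 j)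
      have hwsum : a * τ1 j / τ j + b * τ2 j / τ j = 1 := by
        rw [← add_div, div_eq_one_iff_eq hj]
      have hjensen := hconc.2 (Set.mem_Ici.mpr (hP10 j)) (Set.mem_Ici.mpr (hP20 j)) hw1 hw2 hwsum
      simp only [smul_eq_mul] at hjensen
      have hPj : P j = a * τ1 j / τ j * P1 j + b * τ2 j / τ j * P2 j := by
        simp only [hPdef, if_neg hj]
        rw [div_mul_eq_mul_div, div_mul_eq_mul_div, ← add_div]
      rw [← hPj] at hjensen
      have hmul := mul_le_mul_of_nonneg_left hjensen hτpos.le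
      have hexp : τ j * (a * τ1 j / τ j * (ω j * Real.log (1 + η j * P1 j))
          + b * τ2 j / τ j * (ω j * Real.log (1 + η j * P2 j)))
          = a * (τ1 j * (ω j * Real.log (1 + η j * P1 j)))
          + b * (τ2 j * (ω j * Real.log (1 + η j * P2 j))) := by
        field_simp
        try ring
      rw [hexp] at hmul
      exact hmul
  refine ⟨∑ j, τ j * (ω j * Real.log (1 + η j * P j)), ⟨τ, P, hτ0, hτ1, hP0, ?_, rfl⟩, ?_⟩
  · have e1 : (∑ j, τ j * P j) = a * (∑ j, τ1 j * P1 j) + b * (∑ j, τ2 j * P2 j) := by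
      rw [Finset.mul_sum, Finset.mul_sum, ← Finset.sum_add_distrib]
      exact Finset.sum_congr rfl fun j _ => by rw [hτP j]; ring
    rw [e1]
    have b1 := mul_le_mul_of_nonneg_left hbud1 ha
    have b2 := mul_le_mul_of_nonneg_left hbud2 hb
    linarith
  · have e2 : a * (∑ j, τ1 j * (ω j * Real.log (1 + η j * P1 j)))
        + b * (∑ j, τ2 j * (ω j * Real.log (1 + η j * P2 j)))
        = ∑ j, (a * (τ1 j * (ω j * Real.log (1 + η j * P1 j)))
          + b * (τ2 j * (ω j * Real.log (1 + η j * P2 j)))) := by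
      rw [Finset.mul_sum, Finset.mul_sum, ← Finset.sum_add_distrib]
    rw [e2]
    exact Finset.sum_le_sum fun j _ => hval j

private lemma g_concave {n : ℕ} (hn : 0 < n) (ω η : Fin n → ℝ)
    (hω : ∀ j, 0 < ω j) (hη : ∀ j, 0 < η j) :
    ConcaveOn ℝ (Set.Ici 0) (fun y => sSup (Fs n ω η y)) := by
  refine ⟨convex_Ici 0, ?_⟩
  intro x hx y hy a b ha hb hab
  simp only [smul_eq_mul]
  have hx0 : (0:ℝ) ≤ x := hx
  have hy0 : (0:ℝ) ≤ y := hy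
  have hxy0 : (0:ℝ) ≤ a * x + b * y := add_nonneg (mul_nonneg ha hx0) (mul_nonneg hb hy0)
  have hbdd : BddAbove (Fs n ω η (a * x + b * y)) :=
    ⟨_, fun v hv => Fs_bddAbove ω η hω hη hxy0 v hv⟩
  have key : ∀ v1 ∈ Fs n ω η x, ∀ v2 ∈ Fs n ω η y,
      a * v1 + b * v2 ≤ sSup (Fs n ω η (a * x + b * y)) := by
    intro v1 hv1 v2 hv2
    obtain ⟨v, hv, hle⟩ := Fs_combine ω η hω hη ha hb hab hv1 hv2
    exact hle.trans (le_csSup hbdd hv)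
  rcases eq_or_lt_of_le ha with haz | hapos
  · have hb1 : b = 1 := by linarith
    simp [← haz, hb1]
  rcases eq_or_lt_of_le hb with hbz | hbpos
  · have ha1 : a = 1 := by linarith
    simp [← hbz, ha1]
  have hne1 : (Fs n ω η x).Nonempty := Fs_nonempty hn ω η hx0
  have hne2 : (Fs n ω η y).Nonempty := Fs_nonempty hn ω η hy0
  have step1 : sSup (Fs n ω η y) ≤
      (sSup (Fs n ω η (a * x + b * y)) - a * sSup (Fs n ω η x)) / b := by
    apply csSup_le hne2
    intro v2 hv2
    rw [le_div_iff₀ hbpos]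
    have : sSup (Fs n ω η x) ≤ (sSup (Fs n ω η (a * x + b * y)) - b * v2) / a := by
      apply csSup_le hne1
      intro v1 hv1
      rw [le_div_iff₀ hapos]
      have := key v1 hv1 v2 hv2
      linarith [key v1 hv1 v2 hv2]
    rw [le_div_iff₀ hapos] at this
    linarith
  rw [le_div_iff₀ hbpos] at step1
  linarith

theorem stmt_12 {n : ℕ} (hn : 0 < n) (ω η : Fin n → ℝ)
    (hω : ∀ j, 0 < ω j) (hη : ∀ j, 0 < η j) (Pbar : ℝ) (hP : 0 < Pbar) :
    IsLUB {v : ℝ | ∃ τ P : Fin n → ℝ,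
        (∀ j, 0 ≤ τ j) ∧ (∑ j, τ j) = 1 ∧ (∀ j, 0 ≤ P j) ∧ (∑ j, τ j * P j) ≤ Pbar ∧
        v = ∑ j, τ j * (ω j * Real.log (1 + η j * P j))}
      (sInf {v : ℝ | ∃ g : ℝ → ℝ, ConcaveOn ℝ (Set.Ici 0) g ∧
        (∀ y, 0 ≤ y → ∀ j, ω j * Real.log (1 + η j * y) ≤ g y) ∧ v = g Pbar}) := by
  set g : ℝ → ℝ := fun y => sSup (Fs n ω η y) with hgdef
  have hgconc : ConcaveOn ℝ (Set.Ici 0) g := g_concave hn ω η hω hη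
  have hgmaj : ∀ y, 0 ≤ y → ∀ j, ω j * Real.log (1 + η j * y) ≤ g y := by
    intro y hy j
    exact le_csSup ⟨_, fun v hv => Fs_bddAbove ω η hω hη hy v hv⟩ (f_mem_Fs ω η hy j)
  have hT : g Pbar ∈ {v : ℝ | ∃ g : ℝ → ℝ, ConcaveOn ℝ (Set.Ici 0) g ∧
      (∀ y, 0 ≤ y → ∀ j, ω j * Real.log (1 + η j * y) ≤ g y) ∧ v = g Pbar} :=
    ⟨g, hgconc, hgmaj, rfl⟩
  constructor
  · -- sInf of majorant values is an upper bound
    rintro v hv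
    apply le_csInf ⟨g Pbar, hT⟩
    rintro t ⟨g', hg'c, hg'maj, rfl⟩
    obtain ⟨τ, P, hτ0, hτ1, hP0, hbud, rfl⟩ := hv
    -- pick an index with positive weight
    have hex : ∃ j0, 0 < τ j0 := by
      by_contra hcon
      push_neg at hcon
      have : (∑ j, τ j) ≤ 0 := Finset.sum_nonpos fun j _ => hcon j
      rw [hτ1] at this; linarith
    obtain ⟨j0, hj0⟩ := hex
    set δ := Pbar - ∑ j, τ j * P j with hδdef
    have hδ0 : 0 ≤ δ := by simp only [hδdef]; linarith
    set P' : Fin n → ℝ := fun j => P j + if j = j0 then δ / τ j0 else 0 with hP'def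
    have hPle : ∀ j, P j ≤ P' j := by
      intro j
      simp only [hP'def]
      have : (0:ℝ) ≤ if j = j0 then δ / τ j0 else 0 := by
        split
        · exact div_nonneg hδ0 hj0.le
        · rfl
      linarith
    have hP'0 : ∀ j, 0 ≤ P' j := fun j => (hP0 j).trans (hPle j)
    have hsum' : (∑ j, τ j * P' j) = Pbar := by
      simp only [hP'def, mul_add, Finset.sum_add_distrib, mul_ite, mul_zero]
      rw [Finset.sum_ite_eq' Finset.univ j0 (fun j => τ j * (δ / τ j0))]
      simp only [Finset.mem_univ, if_true]
      have hne := ne_of_gt hj0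
      have hcanc : τ j0 * (δ / τ j0) = δ := by field_simp
      rw [hcanc, hδdef]; ring
    have step1 : (∑ j, τ j * (ω j * Real.log (1 + η j * P j)))
        ≤ ∑ j, τ j * (ω j * Real.log (1 + η j * P' j)) :=
      Finset.sum_le_sum fun j _ => mul_le_mul_of_nonneg_left
        (f_mono (hω j).le (hη j) (hP0 j) (hPle j)) (hτ0 j)
    have step2 : (∑ j, τ j * (ω j * Real.log (1 + η j * P' j)))
        ≤ ∑ j, τ j * g' (P' j) :=
      Finset.sum_le_sum fun j _ => mul_le_mul_of_nonneg_left
        (hg'maj (P' j) (hP'0 j) j) (hτ0 j)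
    have step3 : (∑ j, τ j * g' (P' j)) ≤ g' (∑ j, τ j * P' j) := by
      have := hg'c.le_map_sum (t := Finset.univ) (w := τ) (p := P')
        (fun i _ => hτ0 i) hτ1 (fun i _ => Set.mem_Ici.mpr (hP'0 i))
      simpa [smul_eq_mul] using this
    rw [hsum'] at step3
    linarith
  · -- any upper bound dominates sInf
    intro c hc
    have hbb : BddBelow {v : ℝ | ∃ g : ℝ → ℝ, ConcaveOn ℝ (Set.Ici 0) g ∧
        (∀ y, 0 ≤ y → ∀ j, ω j * Real.log (1 + η j * y) ≤ g y) ∧ v = g Pbar} := by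
      refine ⟨ω ⟨0, hn⟩ * Real.log (1 + η ⟨0, hn⟩ * Pbar), ?_⟩
      rintro t ⟨g', _, hg'maj, rfl⟩
      exact hg'maj Pbar hP.le ⟨0, hn⟩
    refine le_trans (csInf_le hbb hT) ?_
    exact csSup_le (Fs_nonempty hn ω η hP.le) fun v hv => hc hv
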